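/- arXiv:1104.5080 — 3 statements merged into one kernel-verified Lean document; each statement's English description precedes it below -/
import Mathlib

section
/- If λ ∈ Γ_k with the coordinates arranged so that λ_1 ≤ λ_2 ≤ ⋯ ≤ λ_n, then σ_{k−1}(λ|1) ≥ σ_{k−1}(λ|i) for every i, i.e. the derivative of σ_k in the direction of the smallest entry is the largest. -/
section AuxLemmas

open Finset in
/-- Sum of products over `l`-element subsets of `A`. -/
noncomputable def Sig {ι : Type*} [DecidableEq ι] (f : ι → ℝ) (A : Finset ι) (l : ℕ) : ℝ :=
  ∑ s ∈ A.powersetCard l, ∏ i ∈ s, f i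

namespace SigLemmas

open Finset

variable {ι : Type*} [DecidableEq ι] (f : ι → ℝ)

lemma sig_zero (A : Finset ι) : Sig f A 0 = 1 := by
  simp [Sig]

lemma sig_eq_zero_of_lt {A : Finset ι} {l : ℕ} (h : A.card < l) : Sig f A l = 0 := by
  simp only [Sig]
  rw [Finset.powersetCard_eq_empty.2 h, Finset.sum_empty]

lemma sig_insert {i : ι} {A : Finset ι} (h : i ∉ A) (l : ℕ) :
    Sig f (insert i A) (l + 1) = Sig f A (l + 1) + f i * Sig f A l := by
  simp only [Sig]
  rw [Finset.powersetCard_succ_insert h, Finset.sum_union, Finset.sum_image]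
  · congr 1
    rw [Finset.mul_sum]
    apply Finset.sum_congr rfl
    intro t ht
    have hit : i ∉ t := fun hmem =>
      h ((Finset.mem_powersetCard.1 ht).1 hmem)
    rw [Finset.prod_insert hit]
  · intro t ht u hu htu
    have hit : i ∉ t := fun hm => h ((Finset.mem_powersetCard.1 ht).1 hm)
    have hiu : i ∉ u := fun hm => h ((Finset.mem_powersetCard.1 hu).1 hm)
    have := congrArg (fun s => Finset.erase s i) htu
    simpa [Finset.erase_insert, hit, hiu] using this
  · rw [Finset.disjoint_left]
    intro t ht ht'
    obtain ⟨u, hu, rfl⟩ := Finset.mem_image.1 ht'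
    have hiu : i ∉ u := fun hm => h ((Finset.mem_powersetCard.1 hu).1 hm)
    have : i ∈ (insert i u : Finset ι) := Finset.mem_insert_self i u
    exact h ((Finset.mem_powersetCard.1 ht).1 this)

lemma sig_erase {i : ι} {A : Finset ι} (h : i ∈ A) (l : ℕ) :
    Sig f A (l + 1) = Sig f (A.erase i) (l + 1) + f i * Sig f (A.erase i) l := by
  conv_lhs => rw [← Finset.insert_erase h]
  exact sig_insert f (Finset.notMem_erase i A) l

lemma sig_nonneg {A : Finset ι} (h : ∀ j ∈ A, 0 ≤ f j) (l : ℕ) : 0 ≤ Sig f A l := by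
  apply Finset.sum_nonneg
  intro s hs
  exact Finset.prod_nonneg fun j hj => h j ((Finset.mem_powersetCard.1 hs).1 hj)

lemma sig_pos {A B : Finset ι} (hA : ∀ j ∈ A, 0 ≤ f j) (hBA : B ⊆ A) {l : ℕ}
    (hB : B.card = l) (hpos : ∀ j ∈ B, 0 < f j) : 0 < Sig f A l := by
  have hBmem : B ∈ A.powersetCard l := Finset.mem_powersetCard.2 ⟨hBA, hB⟩
  calc (0:ℝ) < ∏ j ∈ B, f j := Finset.prod_pos hpos
    _ ≤ Sig f A l := Finset.single_le_sum
        (fun s hs => Finset.prod_nonneg fun j hj => hA j ((Finset.mem_powersetCard.1 hs).1 hj))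
        hBmem

lemma exists_pos_subset {A : Finset ι} {k : ℕ} (hA : ∀ j ∈ A, 0 ≤ f j)
    (h : 0 < Sig f A k) : ∃ B ⊆ A, B.card = k ∧ ∀ j ∈ B, 0 < f j := by
  classical
  set P := A.filter (fun j => 0 < f j) with hP
  by_cases hcard : k ≤ P.card
  · obtain ⟨B, hBP, hBcard⟩ := Finset.exists_subset_card_eq hcard
    exact ⟨B, hBP.trans (Finset.filter_subset _ _), hBcard,
      fun j hj => (Finset.mem_filter.1 (hBP hj)).2⟩
  · exfalso
    have : Sig f A k = 0 := by
      apply Finset.sum_eq_zero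
      intro s hs
      obtain ⟨hsub, hcardk⟩ := Finset.mem_powersetCard.1 hs
      have : ¬ s ⊆ P := fun hsP => hcard (hcardk ▸ Finset.card_le_card hsP)
      obtain ⟨j, hjs, hjP⟩ := Finset.not_subset.1 this
      have hj0 : f j = 0 := by
        have h1 : 0 ≤ f j := hA j (hsub hjs)
        have h2 : ¬ 0 < f j := fun hpos => hjP (Finset.mem_filter.2 ⟨hsub hjs, hpos⟩)
        linarith [lt_or_eq_of_le h1]
      exact Finset.prod_eq_zero hjs hj0
    linarith


open Polynomial

lemma mesymm_zero (s : Multiset ℝ) : s.esymm 0 = 1 := by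
  simp [Multiset.esymm, Multiset.powersetCard_zero_left]

lemma mesymm_of_lt {s : Multiset ℝ} {l : ℕ} (h : Multiset.card s < l) : s.esymm l = 0 := by
  simp [Multiset.esymm, Multiset.powersetCard_eq_empty _ h]

lemma mesymm_cons (x : ℝ) (s : Multiset ℝ) (l : ℕ) :
    (x ::ₘ s).esymm (l + 1) = s.esymm (l + 1) + x * s.esymm l := by
  rw [Multiset.esymm, Multiset.esymm, Multiset.esymm, Multiset.powersetCard_cons,
    Multiset.map_add, Multiset.sum_add, Multiset.map_map]
  congr 1
  rw [← Multiset.sum_map_mul_left]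
  congr 1
  apply Multiset.map_congr rfl
  intro t _
  simp [Multiset.prod_cons]

/-- Top-level Newton inequality: for a multiset of `m+2` reals,
`2(m+2) e_{m+2} e_m ≤ (m+1) e_{m+1}^2`. -/
lemma topNewton : ∀ (m : ℕ) (Z : Multiset ℝ), Multiset.card Z = m + 2 →
    2 * ((m:ℝ) + 2) * (Z.esymm (m + 2) * Z.esymm m) ≤ ((m:ℝ) + 1) * Z.esymm (m + 1) ^ 2 := by
  intro m
  induction m with
  | zero =>
    intro Z hZ
    obtain ⟨x, y, rfl⟩ := Multiset.card_eq_two.mp hZ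
    have c2 : (x ::ₘ {y} : Multiset ℝ).esymm 2 = x * y := by
      simp [Multiset.esymm, Multiset.powersetCard_zero_left, Multiset.powersetCard_one]
    have c1 : (x ::ₘ {y} : Multiset ℝ).esymm 1 = x + y := by
      simp [Multiset.esymm, Multiset.powersetCard_one]; ring
    have c0 : (x ::ₘ {y} : Multiset ℝ).esymm 0 = 1 := by
      simp [Multiset.esymm, Multiset.powersetCard_zero_left]
    norm_num [c2, c1, c0]
    nlinarith [sq_nonneg (x - y)]
  | succ m ih =>
    intro Z hZ
    have hne : Z ≠ 0 := by intro h; rw [h] at hZ; simp at hZ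
    obtain ⟨x, hx⟩ := Multiset.exists_mem_of_ne_zero hne
    obtain ⟨Z', rfl⟩ := Multiset.exists_cons_of_mem hx
    have hZ' : Multiset.card Z' = m + 2 := by
      rw [Multiset.card_cons] at hZ; omega
    have IH := ih Z' hZ'
    have e3 : (x ::ₘ Z').esymm (m + 1 + 2) = Z'.esymm (m + 3) + x * Z'.esymm (m + 2) :=
      mesymm_cons x Z' (m + 2)
    have e2 : (x ::ₘ Z').esymm (m + 2) = Z'.esymm (m + 2) + x * Z'.esymm (m + 1) :=
      mesymm_cons x Z' (m + 1)
    have e1 : (x ::ₘ Z').esymm (m + 1) = Z'.esymm (m + 1) + x * Z'.esymm m :=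
      mesymm_cons x Z' m
    have etop : Z'.esymm (m + 3) = 0 := mesymm_of_lt (by omega)
    rw [e3, etop, e2, e1]
    set b := Z'.esymm (m + 2)
    set c := Z'.esymm (m + 1)
    set d := Z'.esymm m
    have hmpos : (0:ℝ) < (m:ℝ) + 2 := by positivity
    have key : (x:ℝ)^2 * (2 * ((m:ℝ) + 2) * (b * d)) ≤ x^2 * (((m:ℝ) + 1) * c^2) :=
      mul_le_mul_of_nonneg_left IH (sq_nonneg x)
    push_cast
    nlinarith [key, sq_nonneg (((m:ℝ) + 2) * b - x * c), hmpos]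


/-- Newton's inequality for multisets of reals:
with `N = a + d + 2` elements, `(a+2)(d+2) e_{a+2} e_a ≤ (a+1)(d+1) e_{a+1}^2`. -/
lemma newtonM : ∀ (d a : ℕ) (M : Multiset ℝ), Multiset.card M = a + d + 2 →
    ((a:ℝ) + 2) * ((d:ℝ) + 2) * (M.esymm (a + 2) * M.esymm a) ≤
      ((a:ℝ) + 1) * ((d:ℝ) + 1) * M.esymm (a + 1) ^ 2 := by
  intro d
  induction d with
  | zero =>
    intro a M hM
    have h := topNewton a M hM
    norm_num
    nlinarith [h]
  | succ d ih =>
    intro a M hM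
    have hM' : Multiset.card M = a + d + 3 := by omega
    set p := (M.map fun r => X - C r).prod with hp
    have hmon : p.Monic :=
      monic_multiset_prod_of_monic _ _ fun _ _ => monic_X_sub_C _
    have hpdeg : p.natDegree = a + d + 3 := by
      rw [hp, natDegree_multiset_prod_X_sub_C_eq_card, hM']
    have hproots : p.roots = M := roots_multiset_prod_X_sub_C M
    set q := derivative p with hq
    have hq3 : q.natDegree < p.natDegree := natDegree_derivative_lt (by omega)
    have h1 : Multiset.card p.roots ≤ Multiset.card q.roots + 1 := p.card_roots_le_derivative
    have h2 : Multiset.card q.roots ≤ q.natDegree := q.card_roots'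
    have hcr : Multiset.card p.roots = a + d + 3 := by rw [hproots, hM']
    have hqdeg : q.natDegree = a + d + 2 := by omega
    have hqroots : Multiset.card q.roots = a + d + 2 := by omega
    have hqroots' : Multiset.card q.roots = q.natDegree := by omega
    -- leading coefficient of q
    have hpc : p.coeff (a + d + 3) = 1 := by
      rw [← hpdeg]; exact hmon.coeff_natDegree
    have hlc : q.leadingCoeff = (a:ℝ) + d + 3 := by
      rw [Polynomial.leadingCoeff, hqdeg, hq, coeff_derivative]
      rw [show a + d + 2 + 1 = a + d + 3 from rfl, hpc]
      push_cast; ring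
    -- the key coefficient identities
    have key : ∀ t, t ≤ a + 2 → ((a:ℝ) + d + 3) * (q.roots).esymm t =
        ((a:ℝ) + d + 3 - t) * M.esymm t := by
      intro t ht
      have e1 : q.coeff (a + d + 2 - t) = p.coeff (a + d + 3 - t) * (((a + d + 2 - t : ℕ) : ℝ) + 1) := by
        rw [hq, coeff_derivative, show a + d + 2 - t + 1 = a + d + 3 - t from by omega]
      have e2 : p.coeff (a + d + 3 - t) = (-1:ℝ) ^ t * M.esymm t := by
        have h := Multiset.prod_X_sub_C_coeff M (show a + d + 3 - t ≤ Multiset.card M by omega)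
        rw [show Multiset.card M - (a + d + 3 - t) = t from by omega] at h
        exact h
      have e3 : q.coeff (a + d + 2 - t) =
          q.leadingCoeff * (-1:ℝ) ^ t * (q.roots).esymm t := by
        have h := Polynomial.coeff_eq_esymm_roots_of_card hqroots'
          (show a + d + 2 - t ≤ q.natDegree by omega)
        rw [show q.natDegree - (a + d + 2 - t) = t from by rw [hqdeg]; omega] at h
        exact h
      have heq : q.leadingCoeff * (-1:ℝ) ^ t * (q.roots).esymm t =
          ((-1:ℝ) ^ t * M.esymm t) * (((a + d + 2 - t : ℕ) : ℝ) + 1) := by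
        rw [← e2, ← e1, e3]
      rw [hlc] at heq
      have hcast : ((a + d + 2 - t : ℕ) : ℝ) = (a:ℝ) + d + 2 - t := by
        push_cast [Nat.cast_sub (show t ≤ a + d + 2 by omega)]; ring
      rw [hcast] at heq
      have h4 : (-1:ℝ) ^ t * (((a:ℝ) + d + 3) * (q.roots).esymm t) =
          (-1:ℝ) ^ t * (((a:ℝ) + d + 3 - t) * M.esymm t) := by
        linear_combination heq
      exact mul_left_cancel₀ (pow_ne_zero t (by norm_num : (-1:ℝ) ≠ 0)) h4
    set N := ((a:ℝ) + d + 3) with hN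
    have k0 : N * (q.roots).esymm a = ((d:ℝ) + 3) * M.esymm a := by
      have h := key a (by omega); push_cast at h ⊢; linear_combination h
    have k1 : N * (q.roots).esymm (a + 1) = ((d:ℝ) + 2) * M.esymm (a + 1) := by
      have h := key (a + 1) (by omega); push_cast at h ⊢; linear_combination h
    have k2 : N * (q.roots).esymm (a + 2) = ((d:ℝ) + 1) * M.esymm (a + 2) := by
      have h := key (a + 2) le_rfl; push_cast at h ⊢; linear_combination h
    have IH := ih a q.roots (by omega)
    have hmul : (0:ℝ) < ((d:ℝ) + 2) * ((d:ℝ) + 1) := by positivity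
    have main : ((d:ℝ) + 2) * ((d:ℝ) + 1) * (((a:ℝ) + 2) * ((d:ℝ) + 3) * (M.esymm (a + 2) * M.esymm a)) ≤
        ((d:ℝ) + 2) * ((d:ℝ) + 1) * (((a:ℝ) + 1) * ((d:ℝ) + 2) * M.esymm (a + 1) ^ 2) := by
      calc ((d:ℝ) + 2) * ((d:ℝ) + 1) * (((a:ℝ) + 2) * ((d:ℝ) + 3) * (M.esymm (a + 2) * M.esymm a))
          = ((a:ℝ) + 2) * ((d:ℝ) + 2) *
            ((((d:ℝ) + 1) * M.esymm (a + 2)) * (((d:ℝ) + 3) * M.esymm a)) := by ring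
        _ = ((a:ℝ) + 2) * ((d:ℝ) + 2) * ((N * (q.roots).esymm (a + 2)) * (N * (q.roots).esymm a)) := by
            rw [k2, k0]
        _ = N ^ 2 * (((a:ℝ) + 2) * ((d:ℝ) + 2) * ((q.roots).esymm (a + 2) * (q.roots).esymm a)) := by
            ring
        _ ≤ N ^ 2 * (((a:ℝ) + 1) * ((d:ℝ) + 1) * (q.roots).esymm (a + 1) ^ 2) :=
            mul_le_mul_of_nonneg_left IH (sq_nonneg N)
        _ = ((a:ℝ) + 1) * ((d:ℝ) + 1) * (N * (q.roots).esymm (a + 1)) ^ 2 := by ring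
        _ = ((a:ℝ) + 1) * ((d:ℝ) + 1) * (((d:ℝ) + 2) * M.esymm (a + 1)) ^ 2 := by rw [k1]
        _ = ((d:ℝ) + 2) * ((d:ℝ) + 1) * (((a:ℝ) + 1) * ((d:ℝ) + 2) * M.esymm (a + 1) ^ 2) := by ring
    have := le_of_mul_le_mul_left main hmul
    push_cast
    nlinarith [this]


lemma sig_eq_mesymm {ι : Type*} [DecidableEq ι] (f : ι → ℝ) (A : Finset ι) (l : ℕ) :
    Sig f A l = (A.val.map f).esymm l :=
  (Finset.esymm_map_val f A l).symm

/-- Newton's inequality, `Finset` version. -/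
lemma newtonF {ι : Type*} [DecidableEq ι] (f : ι → ℝ) (A : Finset ι) (a d : ℕ)
    (hcard : A.card = a + d + 2) :
    ((a:ℝ) + 2) * ((d:ℝ) + 2) * (Sig f A (a + 2) * Sig f A a) ≤
      ((a:ℝ) + 1) * ((d:ℝ) + 1) * Sig f A (a + 1) ^ 2 := by
  rw [sig_eq_mesymm, sig_eq_mesymm, sig_eq_mesymm]
  exact newtonM d a (A.val.map f) (by rw [Multiset.card_map]; exact hcard)

/-- The main lemma: if all `σ_l`, `1 ≤ l ≤ k`, are positive on `A`, then all
`σ_l`, `l < k`, are positive on `A.erase i`. -/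
lemma main {ι : Type*} [DecidableEq ι] (f : ι → ℝ) :
    ∀ (N : ℕ) (A : Finset ι), A.card ≤ N → ∀ k, 1 ≤ k → k ≤ A.card →
      (∀ l, 1 ≤ l → l ≤ k → 0 < Sig f A l) →
      ∀ i ∈ A, ∀ l, l < k → 0 < Sig f (A.erase i) l := by
  intro N
  induction N with
  | zero =>
    intro A hA k hk1 hkA _ i _ l _
    omega
  | succ N IHN =>
    intro A hA k hk1 hkA hG i hi l hl
    by_cases hNN : ∀ j ∈ A, 0 ≤ f j
    · -- all entries nonnegative
      obtain ⟨B, hBA, hBcard, hBpos⟩ := exists_pos_subset f hNN (hG k hk1 le_rfl)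
      have h1 : l ≤ (B.erase i).card := by
        by_cases hiB : i ∈ B
        · rw [Finset.card_erase_of_mem hiB, hBcard]; omega
        · rw [Finset.erase_eq_of_notMem hiB, hBcard]; omega
      obtain ⟨C, hCB, hCcard⟩ := Finset.exists_subset_card_eq h1
      exact sig_pos f (fun j hj => hNN j (Finset.mem_of_mem_erase hj))
        (hCB.trans (Finset.erase_subset_erase i hBA)) hCcard
        (fun j hj => hBpos j (Finset.mem_of_mem_erase (hCB hj)))
    · push_neg at hNN
      obtain ⟨j0, hj0A, hj0⟩ := hNN
      obtain ⟨m, hmA, hmmin⟩ := Finset.exists_min_image A f ⟨j0, hj0A⟩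
      have hm : f m < 0 := lt_of_le_of_lt (hmmin j0 hj0A) hj0
      -- erasing an entry with nonpositive value keeps all σ_l (l ≤ k) positive
      have key : ∀ y ∈ A, f y ≤ 0 → ∀ l', l' ≤ k → 0 < Sig f (A.erase y) l' := by
        intro y hy hyneg l'
        induction l' with
        | zero => intro _; rw [sig_zero]; norm_num
        | succ l'' ihl =>
          intro hl'
          have h1 := hG (l'' + 1) (by omega) hl'
          rw [sig_erase f hy] at h1
          have h2 : f y * Sig f (A.erase y) l'' ≤ 0 :=
            mul_nonpos_of_nonpos_of_nonneg hyneg (le_of_lt (ihl (by omega)))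
          linarith
      by_cases hfi : f i ≤ 0
      · exact key i hi hfi l (by omega)
      · push_neg at hfi
        have him : i ≠ m := by
          intro h; rw [h] at hfi; linarith
        set A' := A.erase m with hA'
        have hB : ∀ l', l' ≤ k → 0 < Sig f A' l' := key m hmA (le_of_lt hm)
        have hkA' : k ≤ A'.card := by
          by_contra h
          have h0 := sig_eq_zero_of_lt f (A := A') (l := k) (by omega)
          have := hB k le_rfl
          linarith
        have hcardA' : A'.card ≤ N := by
          rw [hA', Finset.card_erase_of_mem hmA]; omega
        have hiA' : i ∈ A' := Finset.mem_erase.2 ⟨him, hi⟩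
        have IH := IHN A' hcardA' k hk1 hkA' (fun l' h1 h2 => hB l' h2) i hiA'
        set R := A'.erase i with hR
        set c := -f m with hc
        have hcpos : 0 < c := by rw [hc]; linarith
        have hGc : ∀ l'', l'' + 1 ≤ k → 0 < Sig f A' (l'' + 1) - c * Sig f A' l'' := by
          intro l'' h
          have h1 := hG (l'' + 1) (by omega) h
          rw [sig_erase f hmA] at h1
          rw [hc]
          linarith
        -- the crucial claim
        have hW : ∀ l'', l'' + 1 < k → c * Sig f R l'' < Sig f R (l'' + 1) := by
          intro l'' hl''
          by_contra hcon
          push_neg at hcon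
          have hR1 : 0 < Sig f R l'' := IH l'' (by omega)
          have hR2 : 0 < Sig f R (l'' + 1) := IH (l'' + 1) (by omega)
          have hGk := hGc (l'' + 1) (by omega)
          rw [sig_erase f hiA' (l'' + 1), sig_erase f hiA' l''] at hGk
          -- hGk : 0 < (SigR(l+2) + f i SigR(l+1)) - c * (SigR(l+1) + f i SigR(l''))
          have hmul : f i * Sig f R (l'' + 1) ≤ f i * (c * Sig f R l'') :=
            mul_le_mul_of_nonneg_left hcon (le_of_lt hfi)
          have hstar : c * Sig f R (l'' + 1) < Sig f R (l'' + 2) := by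
            rw [← hR] at hGk
            nlinarith [hGk, hmul]
          have h2pos : 0 < Sig f R (l'' + 2) :=
            lt_trans (mul_pos hcpos hR2) hstar
          have hcard2 : l'' + 2 ≤ R.card := by
            by_contra h
            have := sig_eq_zero_of_lt f (A := R) (l := l'' + 2) (by omega)
            linarith
          obtain ⟨d, hd⟩ : ∃ d, R.card = l'' + d + 2 := ⟨R.card - l'' - 2, by omega⟩
          have hNwt := newtonF f R l'' d hd
          -- conclude Sig R (l''+2) * Sig R l'' ≤ Sig R (l''+1)^2
          have hcoef : ((l'':ℝ) + 1) * ((d:ℝ) + 1) ≤ ((l'':ℝ) + 2) * ((d:ℝ) + 2) := by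
            nlinarith [Nat.cast_nonneg (α := ℝ) l'', Nat.cast_nonneg (α := ℝ) d]
          have hc2 : (0:ℝ) < ((l'':ℝ) + 2) * ((d:ℝ) + 2) := by positivity
          have hXY : Sig f R (l'' + 2) * Sig f R l'' ≤ Sig f R (l'' + 1) ^ 2 := by
            have h5 : ((l'':ℝ) + 2) * ((d:ℝ) + 2) * (Sig f R (l'' + 2) * Sig f R l'') ≤
                ((l'':ℝ) + 2) * ((d:ℝ) + 2) * Sig f R (l'' + 1) ^ 2 :=
              le_trans hNwt (mul_le_mul_of_nonneg_right hcoef (sq_nonneg _))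
            exact le_of_mul_le_mul_left h5 hc2
          have h6 : Sig f R (l'' + 2) * Sig f R l'' ≤ (c * Sig f R (l'' + 1)) * Sig f R l'' := by
            have h7 : Sig f R (l'' + 1) * Sig f R (l'' + 1) ≤ Sig f R (l'' + 1) * (c * Sig f R l'') :=
              mul_le_mul_of_nonneg_left hcon (le_of_lt hR2)
            nlinarith [hXY, h7]
          have h8 : Sig f R (l'' + 2) ≤ c * Sig f R (l'' + 1) :=
            le_of_mul_le_mul_right h6 hR1
          linarith
        -- now finish: Sig f (A.erase i) l > 0
        rcases l with _ | l0
        · rw [sig_zero]; norm_num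
        · have hmAi : m ∈ A.erase i := Finset.mem_erase.2 ⟨fun h => him h.symm, hmA⟩
          rw [sig_erase f hmAi l0]
          have hcomm : (A.erase i).erase m = R := by
            rw [hR, hA', Finset.erase_right_comm]
          rw [hcomm]
          have := hW l0 (by omega)
          rw [hc] at this
          linarith

end SigLemmas

end AuxLemmas

/-- The `k`-th elementary symmetric polynomial of `lam : Fin n → ℝ`. -/
noncomputable def esymm (n k : ℕ) (lam : Fin n → ℝ) : ℝ :=
  ∑ s ∈ Finset.univ.powersetCard k, ∏ i ∈ s, lam i

/-- The Gårding cone `Γ_k ⊆ ℝⁿ`. -/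
def Gamma (n k : ℕ) : Set (Fin n → ℝ) :=
  {lam | ∀ l : ℕ, 1 ≤ l → l ≤ k → 0 < esymm n l lam}

/-- `σ_j(λ|i)`: the `j`-th elementary symmetric polynomial of `λ` with the
`i`-th coordinate deleted. -/
noncomputable def esymmDel (n j : ℕ) (i : Fin n) (lam : Fin n → ℝ) : ℝ :=
  ∑ s ∈ (Finset.univ.erase i).powersetCard j, ∏ m ∈ s, lam m


/-- If `λ ∈ Γ_k` with `λ_1 ≤ ⋯ ≤ λ_n`, then `σ_{k-1}(λ|1) ≥ σ_{k-1}(λ|i)` for all `i`. -/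
theorem stmt_7 (n k : ℕ) (hn : 0 < n) (hk : 1 ≤ k) (hkn : k ≤ n)
    (lam : Fin n → ℝ) (hlam : lam ∈ Gamma n k)
    (hmono : ∀ i j : Fin n, i ≤ j → lam i ≤ lam j) (i : Fin n) :
    esymmDel n (k - 1) i lam ≤ esymmDel n (k - 1) ⟨0, hn⟩ lam := by
  classical
  open SigLemmas in
  set z : Fin n := ⟨0, hn⟩ with hz
  have hdel : ∀ (j : ℕ) (a : Fin n), esymmDel n j a lam = Sig lam (Finset.univ.erase a) j :=
    fun j a => rfl
  have hes : ∀ j : ℕ, esymm n j lam = Sig lam Finset.univ j := fun j => rfl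
  have hzmin : ∀ m : Fin n, lam z ≤ lam m := fun m => hmono z m (by
    simp [hz, Fin.le_def])
  by_cases hiz : i = z
  · rw [hiz]
  · rcases Nat.eq_or_lt_of_le hk with hk1 | hk2
    · -- k = 1 : both sides are 1
      rw [hdel, hdel, ← hk1]
      norm_num [sig_zero]
    · -- k ≥ 2
      obtain ⟨j, hj⟩ : ∃ j, k - 1 = j + 1 := ⟨k - 2, by omega⟩
      have hzi : z ∈ Finset.univ.erase i :=
        Finset.mem_erase.2 ⟨fun h => hiz h.symm, Finset.mem_univ z⟩
      have hizu : i ∈ Finset.univ.erase z :=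
        Finset.mem_erase.2 ⟨hiz, Finset.mem_univ i⟩
      set D : Finset (Fin n) := (Finset.univ.erase z).erase i with hD
      have hL : Sig lam (Finset.univ.erase i) (j + 1) =
          Sig lam D (j + 1) + lam z * Sig lam D j := by
        rw [sig_erase lam hzi j, hD, Finset.erase_right_comm]
      have hRw : Sig lam (Finset.univ.erase z) (j + 1) =
          Sig lam D (j + 1) + lam i * Sig lam D j := by
        rw [sig_erase lam hizu j, hD]
      have hDj : 0 ≤ Sig lam D j := by
        by_cases hzneg : 0 ≤ lam z
        · exact sig_nonneg lam (fun m _ => le_trans hzneg (hzmin m)) j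
        · push_neg at hzneg
          have hG : ∀ l, 1 ≤ l → l ≤ k → 0 < Sig lam Finset.univ l := by
            intro l h1 h2
            rw [← hes]
            exact hlam l h1 h2
          -- removing the minimal (negative) entry keeps positivity up to level k
          have hB : ∀ l, l ≤ k → 0 < Sig lam (Finset.univ.erase z) l := by
            intro l
            induction l with
            | zero => intro _; rw [sig_zero]; norm_num
            | succ l0 ihl =>
              intro hl
              have h1 := hG (l0 + 1) (by omega) hl
              rw [sig_erase lam (Finset.mem_univ z) l0] at h1
              have h2 : lam z * Sig lam (Finset.univ.erase z) l0 ≤ 0 :=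
                mul_nonpos_of_nonpos_of_nonneg (le_of_lt hzneg) (le_of_lt (ihl (by omega)))
              linarith
          have hkcard : k ≤ (Finset.univ.erase z).card := by
            by_contra h
            have h0 := sig_eq_zero_of_lt lam (A := Finset.univ.erase z) (l := k) (by omega)
            have := hB k le_rfl
            linarith
          have := main lam (Finset.univ.erase z).card (Finset.univ.erase z) le_rfl k hk hkcard
            (fun l h1 h2 => hB l h2) i hizu j (by omega)
          rw [hD]
          exact le_of_lt this
      rw [hdel, hdel, hj, hL, hRw]
      have := mul_le_mul_of_nonneg_right (hzmin i) hDj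
      linarith
end

section
/- (Newton's inequality) For all λ ∈ ℝⁿ and 1 ≤ k ≤ n−1, σ_k(λ)² ≥ σ_{k−1}(λ) σ_{k+1}(λ) · (k(n−k+1))⁻¹ · (k+1)(n−k); more precisely, (σ_k/C(n,k))² ≥ (σ_{k−1}/C(n,k−1)) · (σ_{k+1}/C(n,k+1)). -/
section NewtonAux

open Polynomial

private lemma esymm_zero_of_lt' {u : Multiset ℝ} {j : ℕ} (h : Multiset.card u < j) :
    u.esymm j = 0 := by
  rw [Multiset.esymm, Multiset.powersetCard_eq_empty _ h]
  simp

private lemma deriv_step (m : ℕ) (t : Multiset ℝ) (ht : Multiset.card t = m + 1) :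
    ∃ u : Multiset ℝ, Multiset.card u = m ∧
      ∀ j : ℕ, ((m + 1 : ℕ) : ℝ) * u.esymm j = ((m + 1 - j : ℕ) : ℝ) * t.esymm j := by
  set p : ℝ[X] := (t.map fun a => X - C a).prod with hp
  have hmono : ∀ f ∈ t.map fun a => X - C a, f.Monic := by
    intro f hf
    obtain ⟨a, -, rfl⟩ := Multiset.mem_map.1 hf
    exact monic_X_sub_C a
  have hmonic : p.Monic := monic_multiset_prod_of_monic t _ (fun a _ => monic_X_sub_C a)
  have hdeg : p.natDegree = m + 1 := by
    have h := natDegree_multiset_prod_of_monic _ hmono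
    rw [hp, h, Multiset.map_map]
    simp [Function.comp, natDegree_X_sub_C, ht]
    omega
  have hproots : p.roots = t := roots_multiset_prod_X_sub_C t
  have hlc : (derivative p).coeff m = (m + 1 : ℝ) := by
    rw [coeff_derivative, ← hdeg, hmonic.coeff_natDegree]
    push_cast; ring
  have hne : derivative p ≠ 0 := by
    intro h
    rw [h, coeff_zero] at hlc
    have : (0:ℝ) < (m:ℝ) + 1 := by positivity
    linarith
  have hdle : (derivative p).natDegree ≤ m := by
    simpa [hdeg] using natDegree_derivative_le p
  have hdge : m ≤ (derivative p).natDegree :=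
    le_natDegree_of_ne_zero (by rw [hlc]; positivity)
  have hddeg : (derivative p).natDegree = m := le_antisymm hdle hdge
  have hdlc : (derivative p).leadingCoeff = (m + 1 : ℝ) := by
    rw [leadingCoeff, hddeg, hlc]
  have hcard : Multiset.card (derivative p).roots = m := by
    refine le_antisymm (hddeg ▸ (derivative p).card_roots') ?_
    have := p.card_roots_le_derivative
    rw [hproots, ht] at this
    omega
  have hsplit : Splits (derivative p) :=
    splits_iff_card_roots.2 (by rw [hcard, hddeg])
  have heq : derivative p =
      C ((m + 1 : ℝ)) * ((derivative p).roots.map fun a => X - C a).prod := by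
    rw [← hdlc]; exact hsplit.eq_prod_roots
  refine ⟨(derivative p).roots, hcard, fun j => ?_⟩
  set e := (derivative p).roots.esymm j with he
  rcases le_or_gt j m with hj | hj
  · have h1 : (derivative p).coeff (m - j) = p.coeff (m - j + 1) * ((m - j + 1 : ℕ) : ℝ) := by
      simpa using coeff_derivative p (m - j)
    have e1 : m - j + 1 = m + 1 - j := by omega
    have h2 : p.coeff (m + 1 - j) = (-1) ^ j * t.esymm j := by
      have hv := Multiset.prod_X_sub_C_coeff t (k := m + 1 - j) (by omega)
      rw [ht] at hv
      have e2 : m + 1 - (m + 1 - j) = j := by omega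
      rw [e2] at hv
      exact hv
    have h3 : (derivative p).coeff (m - j) = ((m:ℝ) + 1) * ((-1) ^ j * e) := by
      conv_lhs => rw [heq]
      rw [coeff_C_mul]
      have hv := Multiset.prod_X_sub_C_coeff (derivative p).roots (k := m - j) (by omega)
      rw [hcard] at hv
      have e2 : m - (m - j) = j := by omega
      rw [e2] at hv
      rw [hv, he]
    rw [h1, e1, h2] at h3
    have hsq : ((-1:ℝ) ^ j) * ((-1:ℝ) ^ j) = 1 := by
      rw [← mul_pow]; norm_num
    have h5 : t.esymm j * ((m + 1 - j : ℕ) : ℝ) = ((m:ℝ) + 1) * e := by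
      calc t.esymm j * ((m + 1 - j : ℕ) : ℝ)
          = ((-1:ℝ)^j * (-1:ℝ)^j) * (t.esymm j * ((m + 1 - j : ℕ) : ℝ)) := by rw [hsq]; ring
        _ = (-1:ℝ)^j * ((-1:ℝ)^j * t.esymm j * ((m + 1 - j : ℕ) : ℝ)) := by ring
        _ = (-1:ℝ)^j * (((m:ℝ) + 1) * ((-1) ^ j * e)) := by rw [h3]
        _ = ((-1:ℝ)^j * (-1:ℝ)^j) * (((m:ℝ) + 1) * e) := by ring
        _ = ((m:ℝ) + 1) * e := by rw [hsq]; ring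
    push_cast at h5 ⊢
    linarith
  · have h1 : e = 0 := esymm_zero_of_lt' (by omega)
    have h2 : (m + 1 - j : ℕ) = 0 := by omega
    rw [h1, h2]
    simp

private lemma chain : ∀ n k : ℕ, k + 1 ≤ n → ∀ t : Multiset ℝ, Multiset.card t = n →
    ∃ u : Multiset ℝ, Multiset.card u = k + 1 ∧
      ∀ j : ℕ, j ≤ k + 1 →
        ((n.choose j : ℕ) : ℝ) * u.esymm j = (((k + 1).choose j : ℕ) : ℝ) * t.esymm j := by
  intro n
  induction n with
  | zero => intro k h; omega
  | succ m ih =>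
    intro k hk t ht
    rcases eq_or_lt_of_le hk with heq | hlt
    · exact ⟨t, by rw [ht, ← heq], fun j hj => by rw [heq]⟩
    · obtain ⟨u', hcard', hstep⟩ := deriv_step m t ht
      obtain ⟨u, hcard, hrel⟩ := ih k (by omega) u' hcard'
      refine ⟨u, hcard, fun j hj => ?_⟩
      have h1 := hstep j
      have h2 := hrel j hj
      have hid : (m.choose j) * (m + 1) = ((m + 1).choose j) * (m + 1 - j) :=
        Nat.choose_mul_succ_eq m j
      have hcast : ((m.choose j : ℕ) : ℝ) * ((m + 1 : ℕ) : ℝ)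
          = (((m + 1).choose j : ℕ) : ℝ) * ((m + 1 - j : ℕ) : ℝ) := by
        exact_mod_cast congrArg (Nat.cast (R := ℝ)) hid
      have hpos : ((m + 1 - j : ℕ) : ℝ) ≠ 0 := by
        have : 0 < m + 1 - j := by omega
        positivity
      apply mul_left_cancel₀ hpos
      calc ((m + 1 - j : ℕ) : ℝ) * ((((m + 1).choose j : ℕ) : ℝ) * u.esymm j)
          = ((m.choose j : ℕ) : ℝ) * ((m + 1 : ℕ) : ℝ) * u.esymm j := by
            linear_combination (-(u.esymm j)) * hcast
        _ = ((m + 1 : ℕ) : ℝ) * (((m.choose j : ℕ) : ℝ) * u.esymm j) := by ring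
        _ = ((m + 1 : ℕ) : ℝ) * ((((k + 1).choose j : ℕ) : ℝ) * u'.esymm j) := by rw [h2]
        _ = (((k + 1).choose j : ℕ) : ℝ) * (((m + 1 : ℕ) : ℝ) * u'.esymm j) := by ring
        _ = (((k + 1).choose j : ℕ) : ℝ) * (((m + 1 - j : ℕ) : ℝ) * t.esymm j) := by rw [h1]
        _ = ((m + 1 - j : ℕ) : ℝ) * ((((k + 1).choose j : ℕ) : ℝ) * t.esymm j) := by ring

private lemma exists_fun : ∀ (N : ℕ) (u : Multiset ℝ), Multiset.card u = N →
    ∃ x : Fin N → ℝ, Finset.univ.val.map x = u := by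
  intro N u h
  have hl : u.toList.length = N := by rw [Multiset.length_toList, h]
  subst hl
  refine ⟨u.toList.get, ?_⟩
  rw [Fin.univ_val_map, List.ofFn_get, Multiset.coe_toList]

private lemma esymm_eq_multiset (N j : ℕ) (x : Fin N → ℝ) :
    esymm N j x = (Finset.univ.val.map x).esymm j :=
  (Finset.esymm_map_val x Finset.univ j).symm

private lemma esymm_zero (N : ℕ) (x : Fin N → ℝ) : esymm N 0 x = 1 := by
  simp [esymm]

private lemma esymm_one' (N : ℕ) (x : Fin N → ℝ) : esymm N 1 x = ∑ i, x i := by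
  simp [esymm, Finset.powersetCard_one]

private lemma esymm_top (N : ℕ) (x : Fin N → ℝ) : esymm N N x = ∏ i, x i := by
  unfold esymm
  have hc : (Finset.univ : Finset (Fin N)).card = N := by simp
  have : (Finset.univ : Finset (Fin N)).powersetCard N = {Finset.univ} := by
    have h := Finset.powersetCard_self (Finset.univ : Finset (Fin N))
    rwa [hc] at h
  rw [this, Finset.sum_singleton]

private lemma lemmaA (N : ℕ) (hN : 2 ≤ N) (x : Fin N → ℝ) :
    (esymm N 1 x / (N : ℝ)) ^ 2 ≥ esymm N 2 x / (N.choose 2 : ℝ) := by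
  obtain ⟨u, hcard, hrel⟩ := chain N 1 hN (Finset.univ.val.map x) (by simp)
  obtain ⟨y, hy⟩ := exists_fun 2 u hcard
  have hu1 : u.esymm 1 = y 0 + y 1 := by
    rw [← hy, ← esymm_eq_multiset, esymm_one', Fin.sum_univ_two]
  have hu2 : u.esymm 2 = y 0 * y 1 := by
    rw [← hy, ← esymm_eq_multiset, esymm_top, Fin.prod_univ_two]
  have h1 := hrel 1 (by norm_num)
  have h2 := hrel 2 (by norm_num)
  rw [← esymm_eq_multiset] at h1 h2
  rw [hu1] at h1
  rw [hu2] at h2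
  -- h1 : (N.choose 1) * (y0 + y1) = (2.choose 1) * esymm N 1 x
  -- h2 : (N.choose 2) * (y0*y1) = (2.choose 2) * esymm N 2 x
  have hch1 : ((N.choose 1 : ℕ) : ℝ) = (N : ℝ) := by rw [Nat.choose_one_right]
  have hch21 : ((2:ℕ).choose 1 : ℝ) = 2 := by norm_num
  have hch22 : ((2:ℕ).choose 2 : ℝ) = 1 := by norm_num
  rw [hch1, hch21] at h1
  rw [hch22] at h2
  have hNpos : (0:ℝ) < (N : ℝ) := by positivity
  have hC2pos : (0:ℝ) < ((N.choose 2 : ℕ) : ℝ) := by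
    have : 0 < N.choose 2 := Nat.choose_pos hN
    exact_mod_cast this
  have he1 : esymm N 1 x = (N : ℝ) * (y 0 + y 1) / 2 := by
    field_simp at h1 ⊢
    linarith
  have he2 : esymm N 2 x = ((N.choose 2 : ℕ) : ℝ) * (y 0 * y 1) := by
    linarith
  rw [he1, he2]
  rw [ge_iff_le, div_le_iff₀ hC2pos] at *
  have key : (y 0 - y 1) ^ 2 ≥ 0 := sq_nonneg _
  have : ((N : ℝ) * (y 0 + y 1) / 2 / (N:ℝ)) ^ 2 = ((y 0 + y 1) / 2) ^ 2 := by
    field_simp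
  rw [this]
  nlinarith [key]


private lemma esymm_compl (N j : ℕ) (hj : j ≤ N) (x : Fin N → ℝ) (hx : ∀ i, x i ≠ 0) :
    esymm N j x = (∏ i, x i) * esymm N (N - j) (fun i => (x i)⁻¹) := by
  unfold esymm
  rw [Finset.mul_sum]
  refine Finset.sum_bij' (i := fun s _ => sᶜ) (j := fun s _ => sᶜ) ?_ ?_ ?_ ?_ ?_
  · intro s hs
    rw [Finset.mem_powersetCard_univ] at hs ⊢
    rw [Finset.card_compl, hs]
    simp
  · intro s hs
    rw [Finset.mem_powersetCard_univ] at hs ⊢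
    rw [Finset.card_compl, hs]
    simp
    omega
  · intro s _; simp
  · intro s _; simp
  · intro s hs
    rw [Finset.mem_powersetCard_univ] at hs
    have hsplit : (∏ i, x i) = (∏ i ∈ s, x i) * ∏ i ∈ sᶜ, x i :=
      (Finset.prod_mul_prod_compl s x).symm
    have hne : (∏ i ∈ sᶜ, x i) ≠ 0 := Finset.prod_ne_zero_iff.2 fun i _ => hx i
    dsimp only
    rw [hsplit, Finset.prod_inv_distrib]
    field_simp
  
private lemma lemmaB (k : ℕ) (hk : 1 ≤ k) (ν : Fin (k + 1) → ℝ) :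
    (esymm (k + 1) k ν / ((k + 1).choose k : ℝ)) ^ 2 ≥
      (esymm (k + 1) (k - 1) ν / ((k + 1).choose (k - 1) : ℝ)) *
        (esymm (k + 1) (k + 1) ν / ((k + 1).choose (k + 1) : ℝ)) := by
  by_cases hz : ∃ i, ν i = 0
  · obtain ⟨i, hi⟩ := hz
    have htop : esymm (k + 1) (k + 1) ν = 0 := by
      rw [esymm_top]
      exact Finset.prod_eq_zero (Finset.mem_univ i) hi
    rw [htop]
    simp
    positivity
  · push_neg at hz
    set x : Fin (k + 1) → ℝ := fun i => (ν i)⁻¹ with hxdef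
    set P : ℝ := ∏ i, ν i with hP
    have hPne : P ≠ 0 := Finset.prod_ne_zero_iff.2 fun i _ => hz i
    have hek : esymm (k + 1) k ν = P * esymm (k + 1) 1 x := by
      have := esymm_compl (k + 1) k (by omega) ν hz
      rwa [show k + 1 - k = 1 by omega] at this
    have hekm : esymm (k + 1) (k - 1) ν = P * esymm (k + 1) 2 x := by
      have := esymm_compl (k + 1) (k - 1) (by omega) ν hz
      rwa [show k + 1 - (k - 1) = 2 by omega] at this
    have hetop : esymm (k + 1) (k + 1) ν = P := by rw [esymm_top]
    have hchoosek : (((k + 1).choose k : ℕ) : ℝ) = ((k : ℝ) + 1) := by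
      rw [Nat.choose_succ_self_right]
      push_cast; ring
    have hsymm : ((k + 1).choose (k - 1)) = ((k + 1).choose 2) := by
      rw [← Nat.choose_symm (by omega : k - 1 ≤ k + 1)]
      congr 1
      omega
    have hC2pos : (0:ℝ) < (((k + 1).choose 2 : ℕ) : ℝ) := by
      have : 0 < (k + 1).choose 2 := Nat.choose_pos (by omega)
      exact_mod_cast this
    have hA := lemmaA (k + 1) (by omega) x
    rw [hek, hekm, hetop, hchoosek, hsymm, Nat.choose_self]
    set E1 := esymm (k + 1) 1 x
    set E2 := esymm (k + 1) 2 x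
    have hcastN : (((k + 1 : ℕ)) : ℝ) = (k : ℝ) + 1 := by push_cast; ring
    rw [hcastN] at hA
    have hkpos : (0:ℝ) < (k:ℝ) + 1 := by positivity
    have hexp : (P * E1 / ((k:ℝ) + 1)) ^ 2 = P ^ 2 * (E1 / ((k:ℝ) + 1)) ^ 2 := by ring
    have hP2 : (0:ℝ) < P ^ 2 := by positivity
    have hmul : P ^ 2 * (E2 / (((k + 1).choose 2 : ℕ) : ℝ)) ≤ P ^ 2 * (E1 / ((k:ℝ) + 1)) ^ 2 :=
      mul_le_mul_of_nonneg_left hA hP2.le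
    have hrhs : P * E2 / (((k + 1).choose 2 : ℕ) : ℝ) * (P / ((1:ℕ):ℝ)) =
        P ^ 2 * (E2 / (((k + 1).choose 2 : ℕ) : ℝ)) := by
      push_cast
      ring
    rw [hexp, hrhs]
    exact hmul
  
end NewtonAux

set_option maxHeartbeats 1000000 in
/-- Newton's inequality. -/
theorem stmt_9 (n k : ℕ) (hk : 1 ≤ k) (hkn : k ≤ n - 1) (lam : Fin n → ℝ) :
    esymm n k lam ^ 2 ≥
      esymm n (k - 1) lam * esymm n (k + 1) lam *
        (((k * (n - k + 1) : ℕ) : ℝ)⁻¹ * (((k + 1) * (n - k) : ℕ) : ℝ)) ∧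
    (esymm n k lam / (n.choose k : ℝ)) ^ 2 ≥
      (esymm n (k - 1) lam / (n.choose (k - 1) : ℝ)) *
        (esymm n (k + 1) lam / (n.choose (k + 1) : ℝ)) := by
  have hn : k + 1 ≤ n := by omega
  obtain ⟨u, hcard, hrel⟩ := chain n k hn (Finset.univ.val.map lam) (by simp)
  obtain ⟨ν, hν⟩ := exists_fun (k + 1) u hcard
  have hrel' : ∀ j, j ≤ k + 1 → ((n.choose j : ℕ) : ℝ) * esymm (k + 1) j ν =
      (((k + 1).choose j : ℕ) : ℝ) * esymm n j lam := by
    intro j hj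
    have h := hrel j hj
    rw [← hν, ← esymm_eq_multiset, ← esymm_eq_multiset] at h
    exact h
  have hdiv : ∀ j, j ≤ k + 1 → esymm n j lam / (n.choose j : ℝ) =
      esymm (k + 1) j ν / ((k + 1).choose j : ℝ) := by
    intro j hj
    have h := hrel' j hj
    have h1 : (0:ℝ) < (n.choose j : ℝ) := by
      exact_mod_cast Nat.choose_pos (le_trans hj hn)
    have h2 : (0:ℝ) < ((k + 1).choose j : ℝ) := by
      exact_mod_cast Nat.choose_pos hj
    field_simp
    linarith [h]
  have G2 : (esymm n k lam / (n.choose k : ℝ)) ^ 2 ≥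
      (esymm n (k - 1) lam / (n.choose (k - 1) : ℝ)) *
        (esymm n (k + 1) lam / (n.choose (k + 1) : ℝ)) := by
    rw [hdiv k (by omega), hdiv (k - 1) (by omega), hdiv (k + 1) (by omega)]
    exact lemmaB k hk ν
  refine ⟨?_, G2⟩
  set a := esymm n (k - 1) lam
  set b := esymm n k lam
  set c := esymm n (k + 1) lam
  set M : ℕ := n - k with hM
  have hM1 : 1 ≤ M := by omega
  have hnk1 : n - k + 1 = M + 1 := by omega
  set rA : ℝ := (n.choose (k - 1) : ℝ) with hrA
  set rB : ℝ := (n.choose k : ℝ) with hrB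
  set rC : ℝ := (n.choose (k + 1) : ℝ) with hrC
  have hA0 : (0:ℝ) < rA := by
    rw [hrA]; exact_mod_cast Nat.choose_pos (by omega)
  have hB0 : (0:ℝ) < rB := by
    rw [hrB]; exact_mod_cast Nat.choose_pos (by omega)
  have hC0 : (0:ℝ) < rC := by
    rw [hrC]; exact_mod_cast Nat.choose_pos (by omega)
  have hk0 : (0:ℝ) < (k : ℝ) := by exact_mod_cast hk
  have hM0 : (0:ℝ) < (M : ℝ) := by exact_mod_cast hM1
  have id1 : n.choose k * k = n.choose (k - 1) * (M + 1) := by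
    have h := Nat.choose_succ_right_eq n (k - 1)
    rw [show k - 1 + 1 = k by omega] at h
    rw [h]
    congr 1
    omega
  have id2 : n.choose (k + 1) * (k + 1) = n.choose k * M := by
    have h := Nat.choose_succ_right_eq n k
    rw [h]
  have id1r : rB * (k : ℝ) = rA * ((M : ℝ) + 1) := by
    rw [hrA, hrB]; exact_mod_cast congrArg (Nat.cast (R := ℝ)) id1
  have id2r : rC * ((k : ℝ) + 1) = rB * (M : ℝ) := by
    rw [hrB, hrC]; exact_mod_cast congrArg (Nat.cast (R := ℝ)) id2
  have hcast1 : ((k * (n - k + 1) : ℕ) : ℝ) = (k : ℝ) * ((M : ℝ) + 1) := by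
    rw [hnk1]; push_cast; ring
  have hcast2 : (((k + 1) * (n - k) : ℕ) : ℝ) = ((k : ℝ) + 1) * (M : ℝ) := by
    rw [show n - k = M from rfl]; push_cast; ring
  rw [hcast1, hcast2]
  set c1 : ℝ := ((k : ℝ) * ((M : ℝ) + 1))⁻¹ * (((k : ℝ) + 1) * (M : ℝ)) with hc1
  have hc10 : 0 ≤ c1 := by positivity
  rcases le_or_gt (a * c) 0 with hac | hac
  · have : a * c * c1 ≤ 0 := mul_nonpos_of_nonpos_of_nonneg hac hc10
    nlinarith [sq_nonneg b]
  · have e1 : b ^ 2 = (b / rB) ^ 2 * rB ^ 2 := by field_simp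
    have step1 : b ^ 2 ≥ (a / rA) * (c / rC) * rB ^ 2 := by
      rw [e1]
      exact mul_le_mul_of_nonneg_right G2 (sq_nonneg rB)
    have e2 : (a / rA) * (c / rC) * rB ^ 2 = a * c * (rB ^ 2 / (rA * rC)) := by
      field_simp
    have hcc : c1 ≤ rB ^ 2 / (rA * rC) := by
      rw [hc1, inv_mul_eq_div, div_le_div_iff₀ (by positivity) (by positivity)]
      have p1 : ((k : ℝ) + 1) * (M : ℝ) * (rA * rC) = rA * rB * (M : ℝ) ^ 2 := by
        linear_combination (rA * (M : ℝ)) * id2r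
      have p2 : rB ^ 2 * ((k : ℝ) * ((M : ℝ) + 1)) = rA * rB * ((M : ℝ) + 1) ^ 2 := by
        linear_combination (rB * ((M : ℝ) + 1)) * id1r
      have p3 : rA * rB * (M : ℝ) ^ 2 ≤ rA * rB * ((M : ℝ) + 1) ^ 2 := by
        have h1 : (0:ℝ) ≤ rA * rB := by positivity
        nlinarith [mul_nonneg h1 (by positivity : (0:ℝ) ≤ 2 * (M : ℝ) + 1)]
      linarith
    have final : a * c * c1 ≤ a * c * (rB ^ 2 / (rA * rC)) :=
      mul_le_mul_of_nonneg_left hcc hac.le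
    have step2 : b ^ 2 ≥ a * c * (rB ^ 2 / (rA * rC)) := by
      rw [← e2]; exact step1
    linarith [final, step2]
end

section
/- (Maclaurin's inequality on Γ_k) If λ ∈ Γ_k and 1 ≤ l ≤ m ≤ k, then (σ_m(λ)/C(n,m))^{1/m} ≤ (σ_l(λ)/C(n,l))^{1/l}. In particular σ_k(λ)/σ_1(λ) is bounded above by a constant times σ_1(λ)^{k−1}. -/
namespace MacAux
open Multiset Polynomial

lemma esymm_zero' (s : Multiset ℝ) : s.esymm 0 = 1 := by simp [Multiset.esymm]

lemma esymm_one' (s : Multiset ℝ) : s.esymm 1 = s.sum := by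
  simp [Multiset.esymm, Multiset.powersetCard_one]

lemma esymm_card (s : Multiset ℝ) : s.esymm (Multiset.card s) = s.prod := by
  induction s using Multiset.induction with
  | empty => simp [Multiset.esymm, Multiset.powersetCard_zero_right]
  | cons a t ih =>
    rw [Multiset.card_cons, Multiset.esymm, Multiset.powersetCard_cons,
      Multiset.powersetCard_eq_empty _ (by simp), zero_add, Multiset.map_map]
    simp only [Function.comp, Multiset.prod_cons]
    rw [Multiset.sum_map_mul_left]
    rw [← ih, Multiset.esymm]

lemma esymm_of_gt (s : Multiset ℝ) {j : ℕ} (h : Multiset.card s < j) : s.esymm j = 0 := by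
  rw [Multiset.esymm, Multiset.powersetCard_eq_empty _ h]; simp

lemma esymm_cons (a : ℝ) (t : Multiset ℝ) (j : ℕ) :
    (a ::ₘ t).esymm (j + 1) = t.esymm (j + 1) + a * t.esymm j := by
  rw [Multiset.esymm, Multiset.powersetCard_cons, Multiset.map_add, Multiset.sum_add,
    Multiset.map_map]
  simp only [Function.comp, Multiset.prod_cons]
  rw [Multiset.sum_map_mul_left]
  rfl

lemma expand_sq (a : ℝ) (t : Multiset ℝ) :
    (t.map (fun x => (a - x) ^ 2)).sum
      = (Multiset.card t : ℝ) * a ^ 2 - 2 * a * t.sum + (t.map (fun x => x ^ 2)).sum := by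
  induction t using Multiset.induction with
  | empty => simp
  | cons b u ih => simp only [Multiset.map_cons, Multiset.sum_cons, Multiset.card_cons, ih]
                   push_cast; ring

/-- Cauchy–Schwarz for multisets. -/
lemma sq_sum_le (t : Multiset ℝ) :
    t.sum ^ 2 ≤ (Multiset.card t : ℝ) * (t.map (fun x => x ^ 2)).sum := by
  induction t using Multiset.induction with
  | empty => simp
  | cons a t ih =>
    have h0 : (0:ℝ) ≤ (t.map (fun x => (a - x) ^ 2)).sum :=
      Multiset.sum_nonneg (by intro x hx; obtain ⟨y, _, rfl⟩ := Multiset.mem_map.mp hx; positivity)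
    rw [expand_sq] at h0
    have hq : (0:ℝ) ≤ (t.map (fun x => x ^ 2)).sum :=
      Multiset.sum_nonneg (by intro x hx; obtain ⟨y, _, rfl⟩ := Multiset.mem_map.mp hx; positivity)
    simp only [Multiset.sum_cons, Multiset.map_cons, Multiset.card_cons]
    push_cast
    nlinarith [ih, h0, hq, sq_nonneg a]

/-- `e₁² = ∑ x² + 2 e₂`. -/
lemma sq_esymm_one (t : Multiset ℝ) :
    t.sum ^ 2 = (t.map (fun x => x ^ 2)).sum + 2 * t.esymm 2 := by
  induction t using Multiset.induction with
  | empty => simp [Multiset.esymm, Multiset.powersetCard_zero_right]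
  | cons a u ih =>
    have h2 : (a ::ₘ u).esymm 2 = u.esymm 2 + a * u.esymm 1 := esymm_cons a u 1
    rw [Multiset.sum_cons, Multiset.map_cons, Multiset.sum_cons, h2, esymm_one']
    nlinarith [ih]

/-- Newton's inequality, case `k = 0`: `2 n e₂ ≤ (n-1) e₁²`. -/
lemma newton_one (t : Multiset ℝ) :
    2 * (Multiset.card t : ℝ) * t.esymm 2 ≤ ((Multiset.card t : ℝ) - 1) * t.sum ^ 2 := by
  have h1 := sq_sum_le t
  have h2 := sq_esymm_one t
  nlinarith [h1, h2]

/-- Reversal: `P · e_j(s⁻¹) = e_{n-j}(s)` when all entries are nonzero. -/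
lemma esymm_inv (s : Multiset ℝ) (h : ∀ x ∈ s, x ≠ 0) :
    ∀ j l, j + l = Multiset.card s →
      s.prod * (s.map (fun x => x⁻¹)).esymm j = s.esymm l := by
  induction s using Multiset.induction with
  | empty =>
    intro j l hjl
    simp only [Multiset.card_zero] at hjl
    obtain ⟨rfl, rfl⟩ : j = 0 ∧ l = 0 := by omega
    simp [Multiset.esymm]
  | cons a t ih =>
    intro j l hjl
    have ha : a ≠ 0 := h a (Multiset.mem_cons_self a t)
    have ht : ∀ x ∈ t, x ≠ 0 := fun x hx => h x (Multiset.mem_cons_of_mem hx)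
    rw [Multiset.card_cons] at hjl
    match j with
    | 0 =>
      have : l = Multiset.card t + 1 := by omega
      subst this
      rw [show (Multiset.card t + 1) = Multiset.card (a ::ₘ t) from (Multiset.card_cons a t).symm,
        esymm_card]
      simp [Multiset.esymm]
    | j' + 1 =>
      rw [Multiset.map_cons, esymm_cons, Multiset.prod_cons]
      match l with
      | 0 =>
        have hj' : j' = Multiset.card t := by omega
        have h1 : (t.map (fun x => x⁻¹)).esymm (j' + 1) = 0 :=
          esymm_of_gt _ (by rw [Multiset.card_map]; omega)
        have h2 := ih ht j' 0 (by omega)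
        rw [h1]
        have : a * t.prod * (0 + a⁻¹ * (t.map (fun x => x⁻¹)).esymm j') =
            a * a⁻¹ * (t.prod * (t.map (fun x => x⁻¹)).esymm j') := by ring
        rw [this, mul_inv_cancel₀ ha, one_mul, h2]
        simp [Multiset.esymm]
      | l' + 1 =>
        have h1 := ih ht (j' + 1) l' (by omega)
        have h2 := ih ht j' (l' + 1) (by omega)
        rw [esymm_cons]
        have : a * t.prod * ((t.map (fun x => x⁻¹)).esymm (j' + 1)
              + a⁻¹ * (t.map (fun x => x⁻¹)).esymm j') =
            a * (t.prod * (t.map (fun x => x⁻¹)).esymm (j' + 1))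
              + (a * a⁻¹) * (t.prod * (t.map (fun x => x⁻¹)).esymm j') := by ring
        rw [this, mul_inv_cancel₀ ha, one_mul, h1, h2]
        ring

/-- Derivative step: there is a multiset `t` of size `n-1` whose symmetric functions
match those of `s` up to explicit factors. -/
lemma deriv_step (s : Multiset ℝ) (hn : 1 ≤ Multiset.card s) :
    ∃ t : Multiset ℝ, Multiset.card t = Multiset.card s - 1 ∧
      ∀ i ≤ Multiset.card s - 1,
        (Multiset.card s : ℝ) * t.esymm i = ((Multiset.card s - i : ℕ) : ℝ) * s.esymm i := by
  set n := Multiset.card s with hns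
  set f : Polynomial ℝ := (s.map fun a => X - C a).prod with hf
  have hmonic : f.Monic := monic_multiset_prod_of_monic _ _ (fun a _ => monic_X_sub_C a)
  have hfdeg : f.natDegree = n := natDegree_multiset_prod_X_sub_C_eq_card s
  have hroots : f.roots = s := roots_multiset_prod_X_sub_C s
  set g := derivative f with hg
  have hgle : g.natDegree ≤ n - 1 := by
    have := natDegree_derivative_le f
    rw [hfdeg] at this; exact this
  have hcard1 : n ≤ Multiset.card g.roots + 1 := by
    have := card_roots_le_derivative f
    rw [hroots] at this
    rw [hg]; exact this
  have hcard2 : Multiset.card g.roots ≤ g.natDegree := card_roots' g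
  have hcardt : Multiset.card g.roots = n - 1 := by omega
  have hgdeg : g.natDegree = n - 1 := by omega
  refine ⟨g.roots, hcardt, ?_⟩
  intro i hi
  have hc : ((n - 1 : ℕ) : ℝ) + 1 = (n : ℝ) := by
    rw [Nat.cast_sub hn]; push_cast; ring
  have hglead : g.leadingCoeff = (n : ℝ) := by
    have hfn : f.coeff n = 1 := by rw [← hfdeg]; exact hmonic.coeff_natDegree
    rw [Polynomial.leadingCoeff, hgdeg, hg, coeff_derivative,
      show n - 1 + 1 = n from by omega, hfn, one_mul, hc]
  have hkey := coeff_eq_esymm_roots_of_card (p := g)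
    (by rw [hcardt, hgdeg]) (k := n - 1 - i) (by omega)
  rw [hgdeg, show n - 1 - (n - 1 - i) = i from by omega, hglead] at hkey
  have hkey2 : g.coeff (n - 1 - i) = f.coeff (n - 1 - i + 1) * ((n - 1 - i : ℕ) + 1 : ℝ) := by
    rw [hg, coeff_derivative]
  have hfco := coeff_eq_esymm_roots_of_card (p := f)
    (by rw [hroots, hfdeg]) (k := n - 1 - i + 1) (by omega)
  rw [hfdeg, hroots, show n - (n - 1 - i + 1) = i from by omega,
    hmonic.leadingCoeff, one_mul] at hfco
  rw [hkey, hfco] at hkey2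
  have hne : ((-1 : ℝ)) ^ i ≠ 0 := by positivity
  have : ((n : ℝ)) * g.roots.esymm i = ((n - 1 - i : ℕ) + 1 : ℝ) * s.esymm i := by
    apply mul_left_cancel₀ hne
    linear_combination hkey2
  rw [this]
  congr 1
  rw [show n - i = n - 1 - i + 1 from by omega]
  push_cast; ring

lemma newton_zero (n : ℕ) (s : Multiset ℝ) (hs : Multiset.card s = n) (h2 : 2 ≤ n) :
    s.esymm 0 / (n.choose 0 : ℝ) * (s.esymm 2 / (n.choose 2 : ℝ)) ≤
      (s.esymm 1 / (n.choose 1 : ℝ)) ^ 2 := by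
  have hC2nat : n.choose 2 * 2 = n * (n - 1) := by
    have heven : Even (n * (n - 1)) := by
      rcases Nat.even_or_odd n with h | h
      · exact h.mul_right _
      · exact (Nat.Odd.sub_odd h odd_one).mul_left _
    rw [Nat.choose_two_right, Nat.div_mul_cancel heven.two_dvd]
  have hC2 : (n.choose 2 : ℝ) * 2 = (n : ℝ) * ((n : ℝ) - 1) := by
    have := congrArg (Nat.cast (R := ℝ)) hC2nat
    push_cast [Nat.cast_sub (by omega : 1 ≤ n)] at this
    convert this using 2 <;> push_cast <;> ring
  have hC2pos : (0:ℝ) < (n.choose 2 : ℝ) := by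
    exact_mod_cast Nat.choose_pos h2
  have hnpos : (0:ℝ) < (n : ℝ) := by exact_mod_cast (by omega : 0 < n)
  have hN := newton_one s
  rw [hs] at hN
  rw [esymm_one']
  rw [esymm_zero', Nat.choose_zero_right, Nat.choose_one_right, Nat.cast_one, div_one, one_mul,
    div_pow, div_le_div_iff₀ hC2pos (by positivity)]
  nlinarith [mul_le_mul_of_nonneg_left hN (le_of_lt hnpos), sq_nonneg s.sum, hnpos]


theorem newton (n : ℕ) : ∀ s : Multiset ℝ, Multiset.card s = n → ∀ j, j + 2 ≤ n →
    s.esymm j / (n.choose j : ℝ) * (s.esymm (j + 2) / (n.choose (j + 2) : ℝ)) ≤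
      (s.esymm (j + 1) / (n.choose (j + 1) : ℝ)) ^ 2 := by
  induction n with
  | zero => intro s hs j hj; omega
  | succ m ih =>
    intro s hs j hj
    rcases Nat.lt_or_ge (j + 2) (m + 1) with hlt | hge
    · -- derivative step
      have hm1 : 1 ≤ Multiset.card s := by omega
      obtain ⟨t, hct, hpt⟩ := deriv_step s hm1
      rw [hs] at hct hpt
      simp only [Nat.add_sub_cancel] at hct hpt
      have transfer : ∀ i ≤ m, s.esymm i / ((m+1).choose i : ℝ) = t.esymm i / (m.choose i : ℝ) := by
        intro i hi
        have hch : (m.choose i : ℝ) * (m + 1 : ℝ) = ((m+1).choose i : ℝ) * ((m + 1 - i : ℕ) : ℝ) := by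
          exact_mod_cast congrArg (Nat.cast (R := ℝ)) (Nat.choose_mul_succ_eq m i)
        have hkey := hpt i (by omega)
        have hc1 : (0:ℝ) < ((m+1).choose i : ℝ) := by exact_mod_cast Nat.choose_pos (by omega)
        have hc2 : (0:ℝ) < (m.choose i : ℝ) := by exact_mod_cast Nat.choose_pos hi
        have hmi : (0:ℝ) < ((m + 1 - i : ℕ) : ℝ) := by exact_mod_cast (by omega : 0 < m + 1 - i)
        rw [div_eq_div_iff hc1.ne' hc2.ne']
        have hm1R : (0:ℝ) < ((m:ℝ) + 1) := by positivity
        apply mul_left_cancel₀ (ne_of_gt hm1R)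
        push_cast at hkey hch ⊢
        linear_combination s.esymm i * hch - ((m+1).choose i : ℝ) * hkey
      have ht := ih t hct j (by omega)
      rw [transfer j (by omega), transfer (j+1) (by omega), transfer (j+2) (by omega)]
      exact ht
    · -- boundary case j + 2 = m + 1
      have hn : j + 2 = m + 1 := by omega
      rcases Nat.eq_zero_or_pos j with rfl | hj1
      · exact newton_zero (m+1) s hs (by omega)
      by_cases h0 : (0:ℝ) ∈ s
      · have hz : s.esymm (j + 2) = 0 := by
          rw [show j + 2 = Multiset.card s from by omega, esymm_card]
          exact Multiset.prod_eq_zero h0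
        rw [hz, zero_div, mul_zero]
        positivity
      · set t : Multiset ℝ := s.map (fun x => x⁻¹) with htdef
        have hP : s.prod ≠ 0 := Multiset.prod_ne_zero h0
        have hinv := esymm_inv s (fun x hx hx0 => h0 (hx0 ▸ hx))
        have hcs : Multiset.card s = m + 1 := hs
        have e1 : s.esymm j = s.prod * t.esymm 2 := (hinv 2 j (by omega)).symm
        have e2 : s.esymm (j+1) = s.prod * t.esymm 1 := (hinv 1 (j+1) (by omega)).symm
        have e3 : s.esymm (j+2) = s.prod * t.esymm 0 := (hinv 0 (j+2) (by omega)).symm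
        have hc1 : (m+1).choose j = (m+1).choose 2 := by
          rw [show j = m + 1 - 2 from by omega, Nat.choose_symm (by omega)]
        have hc2 : (m+1).choose (j+1) = (m+1).choose 1 := by
          rw [show j + 1 = m + 1 - 1 from by omega, Nat.choose_symm (by omega)]
        have hc3 : (m+1).choose (j+2) = 1 := by
          rw [show j + 2 = m + 1 from by omega, Nat.choose_self]
        have hct : Multiset.card t = m + 1 := by rw [htdef, Multiset.card_map, hcs]
        have base := newton_zero (m+1) t hct (by omega)
        rw [e1, e2, e3, hc1, hc2, hc3, esymm_zero']
        rw [esymm_zero'] at base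
        calc s.prod * t.esymm 2 / ((m+1).choose 2 : ℝ) * (s.prod * 1 / (1:ℕ))
            = s.prod ^ 2 * (1 / ((m+1).choose 0 : ℝ) * (t.esymm 2 / ((m+1).choose 2 : ℝ))) := by
              rw [Nat.choose_zero_right]; push_cast; ring
          _ ≤ s.prod ^ 2 * ((t.esymm 1 / ((m+1).choose 1 : ℝ)) ^ 2) :=
              mul_le_mul_of_nonneg_left base (sq_nonneg _)
          _ = (s.prod * t.esymm 1 / ((m+1).choose 1 : ℝ)) ^ 2 := by ring

lemma maclaurin_abstract (p : ℕ → ℝ) (k : ℕ)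
    (hp0 : p 0 = 1)
    (hpos : ∀ j, 1 ≤ j → j ≤ k → 0 < p j)
    (hN : ∀ j, j + 2 ≤ k → p j * p (j + 2) ≤ p (j + 1) ^ 2) :
    ∀ l m, 1 ≤ l → l ≤ m → m ≤ k → p m ^ l ≤ p l ^ m := by
  have hpos' : ∀ j, j ≤ k → 0 < p j := by
    intro j hj
    rcases Nat.eq_zero_or_pos j with rfl | h1
    · rw [hp0]; norm_num
    · exact hpos j h1 hj
  set r : ℕ → ℝ := fun j => p (j + 1) / p j with hrdef
  have hrpos : ∀ j, j + 1 ≤ k → 0 < r j :=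
    fun j hj => div_pos (hpos' _ hj) (hpos' _ (by omega))
  have hstep : ∀ j, j + 2 ≤ k → r (j + 1) ≤ r j := by
    intro j hj
    rw [hrdef]
    dsimp only
    rw [div_le_div_iff₀ (hpos' _ (by omega)) (hpos' _ (by omega))]
    nlinarith [hN j hj]
  have hrmono : ∀ i j, i ≤ j → j + 1 ≤ k → r j ≤ r i := by
    intro i j hij
    induction j with
    | zero => intro _; rw [Nat.le_zero.mp hij]
    | succ m ihm =>
      intro hjk
      rcases Nat.lt_or_ge i (m + 1) with h | h
      · exact le_trans (hstep m (by omega)) (ihm (by omega) (by omega))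
      · have : i = m + 1 := by omega
        rw [this]
  have hprod : ∀ j, j ≤ k → p j = ∏ i ∈ Finset.range j, r i := by
    intro j hj
    induction j with
    | zero => simpa using hp0
    | succ m ihm =>
      rw [Finset.prod_range_succ, ← ihm (by omega), hrdef]
      dsimp only
      rw [mul_div_cancel₀ _ (ne_of_gt (hpos' m (by omega)))]
  intro l m hl hlm hmk
  have hplm : p m ^ l = (∏ i ∈ Finset.range l, r i ^ l) * ∏ i ∈ Finset.Ico l m, r i ^ l := by
    rw [hprod m hmk, ← Finset.prod_range_mul_prod_Ico r hlm, mul_pow, Finset.prod_pow,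
      Finset.prod_pow]
  have hfac : ∀ i ∈ Finset.Ico l m, r i ^ l ≤ p l := by
    intro i hi
    rw [Finset.mem_Ico] at hi
    calc r i ^ l = ∏ _x ∈ Finset.range l, r i := by rw [Finset.prod_const, Finset.card_range]
      _ ≤ ∏ x ∈ Finset.range l, r x := by
          apply Finset.prod_le_prod
          · intro x _; exact le_of_lt (hrpos i (by omega))
          · intro x hx
            rw [Finset.mem_range] at hx
            exact hrmono x i (by omega) (by omega)
      _ = p l := (hprod l (by omega)).symm
  calc p m ^ l = (∏ i ∈ Finset.range l, r i ^ l) * ∏ i ∈ Finset.Ico l m, r i ^ l := hplm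
    _ ≤ (∏ i ∈ Finset.range l, r i ^ l) * ∏ _i ∈ Finset.Ico l m, p l := by
        apply mul_le_mul_of_nonneg_left _ (Finset.prod_nonneg fun i hi => by
          have := Finset.mem_range.mp hi
          exact pow_nonneg (le_of_lt (hrpos i (by omega))) l)
        · exact Finset.prod_le_prod (fun i hi => by
            have := Finset.mem_Ico.mp hi
            exact pow_nonneg (le_of_lt (hrpos i (by omega))) l) hfac
    _ = p l ^ l * p l ^ (m - l) := by
        rw [Finset.prod_const, Nat.card_Ico, Finset.prod_pow, ← hprod l (by omega)]
    _ = p l ^ m := by rw [← pow_add, Nat.add_sub_cancel' hlm]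

lemma esymm_eq_multiset (n j : ℕ) (lam : Fin n → ℝ) :
    _root_.esymm n j lam = (Multiset.map lam Finset.univ.val).esymm j := by
  rw [Finset.esymm_map_val]
  rfl

lemma esymm_zero_eq (n : ℕ) (lam : Fin n → ℝ) : _root_.esymm n 0 lam = 1 := by
  simp [_root_.esymm]

/-- The normalized symmetric functions with all needed properties. -/
lemma main_core (n k : ℕ) (hk : 1 ≤ k) (hkn : k ≤ n) (lam : Fin n → ℝ)
    (hG : lam ∈ Gamma n k) :
    ∀ l m, 1 ≤ l → l ≤ m → m ≤ k →
      (_root_.esymm n m lam / (n.choose m : ℝ)) ^ l ≤ (_root_.esymm n l lam / (n.choose l : ℝ)) ^ m := by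
  set p : ℕ → ℝ := fun j => _root_.esymm n j lam / (n.choose j : ℝ) with hp
  have hp0 : p 0 = 1 := by rw [hp]; simp [esymm_zero_eq]
  have hpos : ∀ j, 1 ≤ j → j ≤ k → 0 < p j := by
    intro j h1 h2
    exact div_pos (hG j h1 h2) (by exact_mod_cast Nat.choose_pos (le_trans h2 hkn))
  have hN : ∀ j, j + 2 ≤ k → p j * p (j + 2) ≤ p (j + 1) ^ 2 := by
    intro j hj
    have hcard : Multiset.card (Multiset.map lam Finset.univ.val) = n := by
      simp
    have := newton n (Multiset.map lam Finset.univ.val) hcard j (by omega)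
    rw [hp]
    simpa only [← esymm_eq_multiset] using this
  exact maclaurin_abstract p k hp0 hpos hN

end MacAux

/-- Maclaurin's inequality on the cone, and the consequence for the quotient. -/
theorem stmt_10 (n k : ℕ) (hk : 1 ≤ k) (hkn : k ≤ n) :
    (∀ lam ∈ Gamma n k, ∀ l m : ℕ, 1 ≤ l → l ≤ m → m ≤ k →
      (esymm n m lam / (n.choose m : ℝ)) ^ ((1 : ℝ) / m) ≤
        (esymm n l lam / (n.choose l : ℝ)) ^ ((1 : ℝ) / l)) ∧
    (∃ C : ℝ, 0 < C ∧ ∀ lam ∈ Gamma n k,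
      esymm n k lam / esymm n 1 lam ≤ C * esymm n 1 lam ^ (k - 1)) := by
  constructor
  · intro lam hG l m hl hlm hmk
    have hcore := MacAux.main_core n k hk hkn lam hG l m hl hlm hmk
    have hml : (0:ℝ) < esymm n m lam / (n.choose m : ℝ) :=
      div_pos (hG m (by omega) hmk)
        (by exact_mod_cast Nat.choose_pos (le_trans hmk hkn))
    have hll : (0:ℝ) < esymm n l lam / (n.choose l : ℝ) :=
      div_pos (hG l hl (by omega))
        (by exact_mod_cast Nat.choose_pos (by omega : l ≤ n))
    have hlR : (0:ℝ) < (l:ℝ) := by exact_mod_cast (by omega : 0 < l)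
    have hmR : (0:ℝ) < (m:ℝ) := by exact_mod_cast (by omega : 0 < m)
    set A := esymm n m lam / (n.choose m : ℝ)
    set B := esymm n l lam / (n.choose l : ℝ)
    have key : (A ^ (l:ℕ) : ℝ) ^ ((1:ℝ) / ((l:ℝ) * (m:ℝ))) ≤
        (B ^ (m:ℕ) : ℝ) ^ ((1:ℝ) / ((l:ℝ) * (m:ℝ))) :=
      Real.rpow_le_rpow (by positivity) hcore (by positivity)
    rw [← Real.rpow_natCast A l, ← Real.rpow_natCast B m,
      ← Real.rpow_mul (le_of_lt hml), ← Real.rpow_mul (le_of_lt hll)] at key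
    rw [show (l:ℝ) * ((1:ℝ) / ((l:ℝ) * (m:ℝ))) = 1 / (m:ℝ) from by field_simp; try ring,
      show (m:ℝ) * ((1:ℝ) / ((l:ℝ) * (m:ℝ))) = 1 / (l:ℝ) from by field_simp; try ring] at key
    exact key
  · refine ⟨(n.choose k : ℝ) / (n:ℝ) ^ k, ?_, ?_⟩
    · apply div_pos
      · exact_mod_cast Nat.choose_pos hkn
      · have : (0:ℝ) < (n:ℝ) := by exact_mod_cast (by omega : 0 < n)
        positivity
    · intro lam hG
      have hcore := MacAux.main_core n k hk hkn lam hG 1 k le_rfl hk le_rfl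
      have h1 : (0:ℝ) < esymm n 1 lam := hG 1 le_rfl hk
      have hnR : (0:ℝ) < (n:ℝ) := by exact_mod_cast (by omega : 0 < n)
      have hCk : (0:ℝ) < (n.choose k : ℝ) := by exact_mod_cast Nat.choose_pos hkn
      rw [pow_one, Nat.choose_one_right] at hcore
      -- hcore : esymm n k lam / choose k ≤ (esymm n 1 lam / n) ^ k
      rw [div_le_iff₀ h1]
      have hpow : esymm n 1 lam ^ (k - 1) * esymm n 1 lam = esymm n 1 lam ^ k := by
        rw [← pow_succ, show k - 1 + 1 = k from by omega]
      rw [mul_assoc, hpow]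
      have := mul_le_mul_of_nonneg_left hcore (le_of_lt hCk)
      calc esymm n k lam = (n.choose k : ℝ) * (esymm n k lam / (n.choose k : ℝ)) := by
            field_simp
        _ ≤ (n.choose k : ℝ) * ((esymm n 1 lam / (n:ℝ)) ^ k) := this
        _ = (n.choose k : ℝ) / (n:ℝ) ^ k * esymm n 1 lam ^ k := by
            rw [div_pow]; ring
end
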